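/- For 0 < θ < 2π and t > 0, the Fourier coefficients of ln f, where f(e^{iθ}) = (e^{iθ}-e^{t})^{α+β}(e^{iθ}-e^{-t})^{α-β}e^{-iθ(α-β)} e^{-iπ(α+β)} e^{V(e^{iθ})}, are given by (ln f)_0 = t(α+β) + V_0 and, for k ≥ 1, (ln f)_k = V_k - (α+β)e^{-tk}/k and (ln f)_{-k} = V_{-k} - (α-β)e^{-tk}/k, where all powers are taken with arguments in (0,2π). -/

import Mathlib

open MeasureTheory intervalIntegral

/-- The branch of the complex logarithm with argument in `(0, 2π)` (cut along `[0,∞)`). -/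
noncomputable def logB (z : ℂ) : ℂ :=
  Complex.log z + (if Complex.arg z < 0 then 2 * Real.pi * Complex.I else 0)

lemma orth (m : ℤ) : (∫ θ in (0:ℝ)..(2*Real.pi), Complex.exp ((m:ℂ) * θ * Complex.I))
    = if m = 0 then (2*Real.pi : ℂ) else 0 := by
  rcases eq_or_ne m 0 with rfl | hm
  · simp
  · rw [if_neg hm]
    have h : ∀ θ : ℝ, (m:ℂ) * θ * Complex.I = ((m:ℂ) * Complex.I) * θ := by intro θ; ring
    simp_rw [h]
    rw [integral_exp_mul_complex (by simp [Complex.ext_iff, hm] : (m:ℂ) * Complex.I ≠ 0)]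
    have h1 : (m:ℂ) * Complex.I * (2*Real.pi : ℝ) = m * (2 * Real.pi * Complex.I) := by
      push_cast; ring
    rw [h1, Complex.exp_int_mul_two_pi_mul_I]
    simp

lemma orth' (k : ℤ) : (∫ θ in (0:ℝ)..(2*Real.pi), Complex.exp (-(k:ℂ) * θ * Complex.I))
    = if k = 0 then (2*Real.pi : ℂ) else 0 := by
  have h := orth (-k)
  simp only [Int.cast_neg, neg_eq_zero] at h
  exact h

lemma logB_eq_of {z w : ℂ} (hz : z ≠ 0) (h : Complex.exp w = z)
    (h0 : 0 < w.im) (h2 : w.im < 2 * Real.pi) : logB z = w := by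
  have hexp : Complex.exp (logB z) = z := by
    unfold logB
    split_ifs
    · rw [Complex.exp_add, Complex.exp_log hz]
      have : (2 * Real.pi * Complex.I : ℂ) = (1:ℤ) * (2 * Real.pi * Complex.I) := by ring
      rw [this, Complex.exp_int_mul_two_pi_mul_I]; ring
    · simpa using Complex.exp_log hz
  have him : (logB z).im ∈ Set.Ico (0:ℝ) (2*Real.pi) := by
    unfold logB
    have ha1 := Complex.neg_pi_lt_arg z
    have ha2 := Complex.arg_le_pi z
    have hpi := Real.pi_pos
    split_ifs with harg
    · constructor
      · simp only [Complex.add_im, Complex.log_im]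
        have : (2 * (Real.pi:ℂ) * Complex.I).im = 2 * Real.pi := by simp
        rw [this]; linarith
      · simp only [Complex.add_im, Complex.log_im]
        have : (2 * (Real.pi:ℂ) * Complex.I).im = 2 * Real.pi := by simp
        rw [this]; linarith
    · push_neg at harg
      constructor
      · simpa [Complex.log_im] using harg
      · simp only [Complex.add_im, Complex.log_im, Complex.zero_im, add_zero]
        linarith
  have hee : Complex.exp (logB z) = Complex.exp w := by rw [hexp, h]
  obtain ⟨n, hn⟩ := Complex.exp_eq_exp_iff_exists_int.mp hee
  have him2 : (logB z).im = w.im + n * (2 * Real.pi) := by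
    have hni : ((n:ℂ) * (2 * Real.pi * Complex.I)).im = n * (2*Real.pi) := by simp
    rw [hn, Complex.add_im, hni]
  have hpi := Real.pi_pos
  have hb1 := him.1
  have hb2 := him.2
  have hn0 : n = 0 := by
    rcases lt_trichotomy n 0 with hlt | rfl | hgt
    · have : (n:ℝ) ≤ -1 := by exact_mod_cast (by omega : n ≤ -1)
      nlinarith
    · rfl
    · have : (1:ℝ) ≤ n := by exact_mod_cast hgt
      nlinarith
  rw [hn]; rw [hn0]; simp

lemma one_sub_ne {x : ℂ} (hx : ‖x‖ < 1) : 0 < (1 - x).re := by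
  have := Complex.re_le_norm x
  simp only [Complex.sub_re, Complex.one_re]
  linarith

lemma one_sub_ne' {x : ℂ} (hx : ‖x‖ < 1) : (1 : ℂ) - x ≠ 0 := by
  intro h
  have := one_sub_ne hx
  rw [h] at this
  simp at this

lemma arg_small {x : ℂ} (hx : ‖x‖ < 1) : |Complex.arg (1 - x)| < Real.pi / 2 :=
  Complex.abs_arg_lt_pi_div_two_iff.mpr (Or.inl (one_sub_ne hx))

lemma abs_exp_eq (t s : ℝ) :
    ‖Complex.exp ((s:ℂ) * Complex.I - t)‖ = Real.exp (-t) := by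
  rw [Complex.norm_exp]; congr 1; simp

lemma abs_exp_lt {t : ℝ} (ht : 0 < t) (s : ℝ) :
    ‖Complex.exp ((s:ℂ) * Complex.I - t)‖ < 1 := by
  rw [abs_exp_eq]
  exact Real.exp_lt_one_iff.mpr (by linarith)

lemma abs_exp_I (z : ℂ) (hz : z.re = 0) : ‖Complex.exp z‖ = 1 := by
  rw [Complex.norm_exp, hz, Real.exp_zero]

lemma logB_plus {t θ : ℝ} (ht : 0 < t) (hθ1 : 0 < θ) (hθ2 : θ < 2*Real.pi) :
    logB (Complex.exp (θ * Complex.I) - (Real.exp t : ℂ))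
      = (t : ℂ) + Real.pi * Complex.I + Complex.log (1 - Complex.exp ((θ:ℂ) * Complex.I - t)) := by
  have hx : ‖Complex.exp ((θ:ℂ) * Complex.I - t)‖ < 1 := abs_exp_lt ht θ
  have hpi := Real.pi_pos
  have harg := abs_lt.mp (arg_small hx)
  refine logB_eq_of ?_ ?_ ?_ ?_
  · intro h
    have h1 : Complex.exp ((θ:ℂ) * Complex.I) = (Real.exp t : ℂ) := sub_eq_zero.mp h
    have h2 := congrArg (‖·‖) h1
    rw [Complex.norm_exp] at h2
    simp at h2
    nlinarith [Real.add_one_le_exp t]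
  · rw [Complex.exp_add, Complex.exp_add, Complex.exp_log (one_sub_ne' hx),
      Complex.exp_pi_mul_I, Complex.ofReal_exp]
    have hmul : Complex.exp (t:ℂ) * Complex.exp ((θ:ℂ) * Complex.I - t)
        = Complex.exp ((θ:ℂ)*Complex.I) := by
      rw [← Complex.exp_add]; congr 1; ring
    linear_combination hmul
  · have him : ((t : ℂ) + Real.pi * Complex.I + Complex.log (1 - Complex.exp ((θ:ℂ) * Complex.I - t))).im
        = Real.pi + Complex.arg (1 - Complex.exp ((θ:ℂ) * Complex.I - t)) := by
      simp [Complex.add_im, Complex.log_im]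
    rw [him]; linarith [harg.1]
  · have him : ((t : ℂ) + Real.pi * Complex.I + Complex.log (1 - Complex.exp ((θ:ℂ) * Complex.I - t))).im
        = Real.pi + Complex.arg (1 - Complex.exp ((θ:ℂ) * Complex.I - t)) := by
      simp [Complex.add_im, Complex.log_im]
    rw [him]; linarith [harg.2]

lemma logB_minus {t θ : ℝ} (ht : 0 < t) (hθ1 : 0 < θ) (hθ2 : θ < 2*Real.pi) :
    logB (Complex.exp (θ * Complex.I) - (Real.exp (-t) : ℂ))
      = (θ:ℂ) * Complex.I + Complex.log (1 - Complex.exp (((-θ:ℝ):ℂ) * Complex.I - t)) := by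
  have hx : ‖Complex.exp (((-θ:ℝ):ℂ) * Complex.I - t)‖ < 1 := abs_exp_lt ht (-θ)
  have hpi := Real.pi_pos
  have harg := abs_lt.mp (arg_small hx)
  have him : ((θ:ℂ) * Complex.I + Complex.log (1 - Complex.exp (((-θ:ℝ):ℂ) * Complex.I - t))).im
      = θ + Complex.arg (1 - Complex.exp (((-θ:ℝ):ℂ) * Complex.I - t)) := by
    simp [Complex.add_im, Complex.log_im]
  have himx : (1 - Complex.exp (((-θ:ℝ):ℂ) * Complex.I - t)).im = Real.exp (-t) * Real.sin θ := by
    rw [Complex.sub_im, Complex.one_im, Complex.exp_im]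
    have h1 : (((-θ:ℝ):ℂ) * Complex.I - (t:ℂ)).re = -t := by simp
    have h2 : (((-θ:ℝ):ℂ) * Complex.I - (t:ℂ)).im = -θ := by simp
    rw [h1, h2, Real.sin_neg]
    ring
  refine logB_eq_of ?_ ?_ ?_ ?_
  · intro h
    have h1 : Complex.exp ((θ:ℂ) * Complex.I) = (Real.exp (-t) : ℂ) := sub_eq_zero.mp h
    have h2 := congrArg (‖·‖) h1
    rw [Complex.norm_exp] at h2
    simp at h2
    rw [Complex.norm_exp] at h2
    simp at h2
    have : Real.exp (-t) < 1 := Real.exp_lt_one_iff.mpr (by linarith)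
    linarith [h2]
  · rw [Complex.exp_add, Complex.exp_log (one_sub_ne' hx), Complex.ofReal_exp]
    have hmul : Complex.exp ((θ:ℂ) * Complex.I) * Complex.exp (((-θ:ℝ):ℂ) * Complex.I - t)
        = Complex.exp ((-t:ℝ):ℂ) := by
      rw [← Complex.exp_add]; congr 1; push_cast; ring
    push_cast at hmul ⊢
    linear_combination -hmul
  · rw [him]
    rcases le_or_gt 0 (Real.sin θ) with hs | hs
    · have : 0 ≤ Complex.arg (1 - Complex.exp (((-θ:ℝ):ℂ) * Complex.I - t)) := by
        rw [Complex.arg_nonneg_iff, himx]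
        positivity
      linarith
    · linarith [harg.1, Real.pi_gt_three,
        (by by_contra hc; push_neg at hc
            exact absurd (Real.sin_nonneg_of_nonneg_of_le_pi (le_of_lt hθ1) hc) (not_le.mpr hs)
          : Real.pi < θ)]
  · rw [him]
    rcases le_or_gt 0 (Real.sin θ) with hs | hs
    · have hθπ : θ ≤ Real.pi := by
        by_contra hc; push_neg at hc
        have h1 : Real.sin (θ - Real.pi) > 0 :=
          Real.sin_pos_of_pos_of_lt_pi (by linarith) (by linarith)
        rw [Real.sin_sub_pi] at h1
        linarith
      linarith [harg.2]
    · have : Complex.arg (1 - Complex.exp (((-θ:ℝ):ℂ) * Complex.I - t)) < 0 := by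
        rw [Complex.arg_neg_iff, himx]
        have := Real.exp_pos (-t)
        nlinarith
      linarith

lemma log_series {x : ℂ} (hx : ‖x‖ < 1) :
    HasSum (fun n : ℕ => -(x^(n+1)/((n:ℂ)+1))) (Complex.log (1 - x)) := by
  have h := (Complex.hasSum_taylorSeries_neg_log hx).neg
  rw [neg_neg] at h
  have h2 := (hasSum_nat_add_iff' (f := fun n : ℕ => -(x^n/(n:ℂ))) 1).mpr h
  simp only [Finset.range_one, Finset.sum_singleton, Nat.cast_zero, div_zero, neg_zero,
    sub_zero] at h2
  convert h2 using 2 with n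
  · rfl
  push_cast
  ring

lemma intLog {t : ℝ} (ht : 0 < t) (ε : ℤ) (hε : ε = 1 ∨ ε = -1) (k : ℤ) :
    (∫ θ in (0:ℝ)..(2*Real.pi),
        Complex.log (1 - Complex.exp (((ε*θ : ℝ):ℂ) * Complex.I - t))
          * Complex.exp (-(k:ℂ) * θ * Complex.I))
      = if 0 < ε*k then -(2*Real.pi) * Real.exp (-(t*(ε*k))) / ((ε*k : ℤ):ℂ) else 0 := by
  set r := Real.exp (-t) with hr_def
  have hr0 : 0 < r := Real.exp_pos _
  have hr1 : r < 1 := Real.exp_lt_one_iff.mpr (by linarith)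
  set F : ℕ → ℝ → ℂ := fun n θ =>
    -(Complex.exp (((ε*θ : ℝ):ℂ) * Complex.I - t)^(n+1)/((n:ℂ)+1))
      * Complex.exp (-(k:ℂ) * θ * Complex.I) with hF_def
  have habs : ∀ θ : ℝ, ‖Complex.exp (((ε*θ : ℝ):ℂ) * Complex.I - t)‖ = r :=
    fun θ => abs_exp_eq t _
  have HS : HasSum (fun n => ∫ θ in (0:ℝ)..(2*Real.pi), F n θ)
      (∫ θ in (0:ℝ)..(2*Real.pi),
        Complex.log (1 - Complex.exp (((ε*θ : ℝ):ℂ) * Complex.I - t))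
          * Complex.exp (-(k:ℂ) * θ * Complex.I)) := by
    apply intervalIntegral.hasSum_integral_of_dominated_convergence
      (bound := fun n _ => r^(n+1))
    · intro n
      apply Continuous.aestronglyMeasurable
      fun_prop
    · intro n
      filter_upwards with θ _
      rw [hF_def]
      simp only
      rw [norm_mul, norm_neg, norm_div, norm_pow,
        habs θ, abs_exp_I _ (by simp)]
      rw [mul_one]
      have h1 : (1:ℝ) ≤ ‖(n:ℂ)+1‖ := by
        have h2 : ((n:ℂ)+1) = ((n+1 : ℕ):ℂ) := by push_cast; ring
        rw [h2, Complex.norm_natCast]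
        exact_mod_cast Nat.one_le_iff_ne_zero.mpr (Nat.succ_ne_zero n)
      calc r^(n+1) / ‖(n:ℂ)+1‖ ≤ r^(n+1) / 1 := by
            apply div_le_div_of_nonneg_left (by positivity) one_pos h1
        _ = r^(n+1) := by ring
    · filter_upwards with θ _
      simp_rw [pow_succ]
      exact (summable_geometric_of_lt_one hr0.le hr1).mul_right r
    · exact intervalIntegrable_const
    · filter_upwards with θ _
      exact (log_series (by rw [habs θ]; exact hr1)).mul_right _
  have hInt : ∀ n : ℕ, (∫ θ in (0:ℝ)..(2*Real.pi), F n θ)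
      = -(((Real.exp (-(t*(n+1))) : ℝ):ℂ)/((n:ℂ)+1)) *
        (if ((n:ℤ)+1)*ε - k = 0 then (2*Real.pi : ℂ) else 0) := by
    intro n
    have hptw : ∀ θ : ℝ, F n θ = -(((Real.exp (-(t*(n+1))) : ℝ):ℂ)/((n:ℂ)+1)) *
        Complex.exp (((((n:ℤ)+1)*ε - k : ℤ):ℂ) * θ * Complex.I) := by
      intro θ
      rw [hF_def]
      simp only
      rw [← Complex.exp_nat_mul _ (n+1), Complex.ofReal_exp]
      have hprod : Complex.exp ((((n+1:ℕ)):ℂ) * (((ε*θ : ℝ):ℂ) * Complex.I - t))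
            * Complex.exp (-((k:ℂ) * θ * Complex.I))
          = Complex.exp (((-(t*((n:ℝ)+1)) : ℝ):ℂ))
            * Complex.exp (((((n:ℤ)+1)*ε - k : ℤ):ℂ) * θ * Complex.I) := by
        rw [← Complex.exp_add, ← Complex.exp_add]
        congr 1
        push_cast
        ring
      simp only [neg_mul, div_mul_eq_mul_div]
      rw [hprod]
    rw [intervalIntegral.integral_congr (fun θ _ => hptw θ), intervalIntegral.integral_const_mul,
      orth]
  have hcond : ∀ n : ℕ, ((((n:ℤ)+1)*ε - k = 0) ↔ ((n:ℤ)+1 = ε*k)) := by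
    rcases hε with rfl | rfl <;> intro n <;> omega
  rw [← HS.tsum_eq]
  by_cases hj : 0 < ε*k
  · rw [if_pos hj]
    set n₀ := (ε*k-1).toNat with hn₀
    have hn : (n₀:ℤ) = ε*k - 1 := Int.toNat_of_nonneg (by omega)
    rw [tsum_eq_single n₀]
    · rw [hInt n₀, if_pos ((hcond n₀).mpr (by omega))]
      have e1 : ((n₀:ℝ)+1) = ((ε*k : ℤ):ℝ) := by
        exact_mod_cast congrArg (Int.cast : ℤ → ℝ) (by omega : (n₀:ℤ)+1 = ε*k)
      have e2 : ((n₀:ℂ)+1) = ((ε*k : ℤ):ℂ) := by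
        exact_mod_cast congrArg (Int.cast : ℤ → ℂ) (by omega : (n₀:ℤ)+1 = ε*k)
      rw [e2]
      rw [show (-(t*((n₀:ℝ)+1))) = (-(t*((ε*k : ℤ):ℝ))) by rw [e1]]
      have e3 : (-(t * ((ε*k : ℤ):ℝ))) = (-(t * ((ε:ℤ):ℝ) * ((k:ℤ):ℝ))) := by push_cast; ring
      rw [e3]
      push_cast
      ring
    · intro b hb
      rw [hInt b, if_neg, mul_zero]
      intro h
      exact hb (by have := (hcond b).mp h; omega)
  · rw [if_neg hj]
    have hz : ∀ n : ℕ, (∫ θ in (0:ℝ)..(2*Real.pi), F n θ) = 0 := by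
      intro n
      rw [hInt n, if_neg, mul_zero]
      intro h
      have := (hcond n).mp h
      omega
    simp [hz]

lemma intLogP {t : ℝ} (ht : 0 < t) (k : ℤ) :
    (∫ θ in (0:ℝ)..(2*Real.pi),
        Complex.log (1 - Complex.exp ((θ:ℂ) * Complex.I - t))
          * Complex.exp (-(k:ℂ) * θ * Complex.I))
      = if 0 < k then -(2*Real.pi) * Real.exp (-(t*k)) / ((k : ℤ):ℂ) else 0 := by
  have h := intLog ht 1 (Or.inl rfl) k
  simpa using h

lemma intLogM {t : ℝ} (ht : 0 < t) (k : ℤ) :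
    (∫ θ in (0:ℝ)..(2*Real.pi),
        Complex.log (1 - Complex.exp (((-θ:ℝ):ℂ) * Complex.I - t))
          * Complex.exp (-(k:ℂ) * θ * Complex.I))
      = if 0 < -k then -(2*Real.pi) * Real.exp (-(t*(-k))) / ((-k : ℤ):ℂ) else 0 := by
  have h := intLog ht (-1) (Or.inr rfl) k
  simpa using h

lemma cont_log {f : ℝ → ℝ} (hf : Continuous f) {t : ℝ} (ht : 0 < t) :
    Continuous fun θ : ℝ => Complex.log (1 - Complex.exp (((f θ :ℝ):ℂ) * Complex.I - t)) := by
  apply continuous_iff_continuousAt.mpr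
  intro θ
  exact ContinuousAt.clog (by fun_prop)
    (Complex.mem_slitPlane_iff.mpr (Or.inl (one_sub_ne (abs_exp_lt ht _))))

lemma cont_tsumV (V : ℤ → ℂ) (hVs : Summable (fun j : ℤ => ‖V j‖)) :
    Continuous fun θ : ℝ => ∑' j : ℤ, V j * Complex.exp ((j:ℂ) * θ * Complex.I) := by
  apply continuous_tsum (u := fun j => ‖V j‖)
  · intro j; fun_prop
  · exact hVs
  · intro j θ
    rw [norm_mul, Complex.norm_exp]
    have : ((j:ℂ) * θ * Complex.I).re = 0 := by simp
    rw [this, Real.exp_zero, mul_one]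

lemma intV (V : ℤ → ℂ) (hVs : Summable (fun j : ℤ => ‖V j‖)) (k : ℤ) :
    (∫ θ in (0:ℝ)..(2*Real.pi), (∑' j : ℤ, V j * Complex.exp ((j:ℂ) * θ * Complex.I))
        * Complex.exp (-(k:ℂ) * θ * Complex.I))
      = 2*Real.pi * V k := by
  set F : ℤ → ℝ → ℂ := fun j θ =>
    V j * Complex.exp ((j:ℂ) * θ * Complex.I) * Complex.exp (-(k:ℂ) * θ * Complex.I) with hF_def
  have hnorm : ∀ j (θ : ℝ), ‖V j * Complex.exp ((j:ℂ) * θ * Complex.I)‖ = ‖V j‖ := by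
    intro j θ
    rw [norm_mul, Complex.norm_exp]
    have : ((j:ℂ) * θ * Complex.I).re = 0 := by simp
    rw [this, Real.exp_zero, mul_one]
  have HS : HasSum (fun j => ∫ θ in (0:ℝ)..(2*Real.pi), F j θ)
      (∫ θ in (0:ℝ)..(2*Real.pi), (∑' j : ℤ, V j * Complex.exp ((j:ℂ) * θ * Complex.I))
        * Complex.exp (-(k:ℂ) * θ * Complex.I)) := by
    apply intervalIntegral.hasSum_integral_of_dominated_convergence
      (bound := fun j _ => ‖V j‖)
    · intro j
      apply Continuous.aestronglyMeasurable
      fun_prop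
    · intro j
      filter_upwards with θ _
      rw [hF_def]
      simp only
      rw [norm_mul]
      rw [hnorm j θ]
      have : ‖Complex.exp (-(k:ℂ) * θ * Complex.I)‖ = 1 := by
        rw [Complex.norm_exp]
        have : (-(k:ℂ) * θ * Complex.I).re = 0 := by simp
        rw [this, Real.exp_zero]
      rw [this, mul_one]
    · filter_upwards with θ _
      exact hVs
    · exact intervalIntegrable_const
    · filter_upwards with θ _
      have hsum : Summable (fun j : ℤ => V j * Complex.exp ((j:ℂ) * θ * Complex.I)) := by
        apply Summable.of_norm
        simpa only [hnorm] using hVs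
      exact hsum.hasSum.mul_right _
  have hInt : ∀ j : ℤ, (∫ θ in (0:ℝ)..(2*Real.pi), F j θ)
      = V j * (if j - k = 0 then (2*Real.pi : ℂ) else 0) := by
    intro j
    have hptw : ∀ θ : ℝ, F j θ = V j * Complex.exp (((j - k : ℤ):ℂ) * θ * Complex.I) := by
      intro θ
      rw [hF_def]
      simp only
      rw [mul_assoc, ← Complex.exp_add]
      congr 2
      push_cast
      ring
    rw [intervalIntegral.integral_congr (fun θ _ => hptw θ), intervalIntegral.integral_const_mul,
      orth]
  rw [← HS.tsum_eq, tsum_eq_single k]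
  · rw [hInt k, if_pos (by ring)]
    ring
  · intro j hj
    rw [hInt j, if_neg (by omega), mul_zero]

/-- Fourier coefficients of `ln f` for the symbol
`f(e^{iθ}) = (e^{iθ}-e^{t})^{α+β}(e^{iθ}-e^{-t})^{α-β}e^{-iθ(α-β)}e^{-iπ(α+β)}e^{V(e^{iθ})}`
with all powers taken with arguments in `(0,2π)`:
`(ln f)_0 = t(α+β)+V_0`, `(ln f)_k = V_k - (α+β)e^{-tk}/k` and
`(ln f)_{-k} = V_{-k} - (α-β)e^{-tk}/k` for `k ≥ 1`. -/
theorem fourier_coeffs_log_symbol (α β : ℂ) (hα : -1/2 < α.re) (t : ℝ) (ht : 0 < t)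
    (V : ℤ → ℂ) (hV : ∃ ρ : ℝ, 1 < ρ ∧ Summable (fun k : ℤ => ‖V k‖ * ρ ^ k.natAbs))
    (lnf : ℝ → ℂ)
    (hlnf : ∀ θ : ℝ, lnf θ =
      (α + β) * logB (Complex.exp (θ * Complex.I) - (Real.exp t : ℂ))
        + (α - β) * logB (Complex.exp (θ * Complex.I) - (Real.exp (-t) : ℂ))
        - Complex.I * θ * (α - β) - Complex.I * Real.pi * (α + β)
        + ∑' k : ℤ, V k * Complex.exp (k * θ * Complex.I))
    (c : ℤ → ℂ)
    (hc : ∀ k : ℤ, c k = (1 / (2 * Real.pi)) *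
      ∫ θ in (0:ℝ)..(2 * Real.pi), lnf θ * Complex.exp (-k * θ * Complex.I)) :
    c 0 = t * (α + β) + V 0 ∧
    ∀ k : ℕ, 1 ≤ k →
      c k = V k - (α + β) * Real.exp (-t * k) / k ∧
      c (-(k : ℤ)) = V (-(k : ℤ)) - (α - β) * Real.exp (-t * k) / k := by
  obtain ⟨ρ, hρ, hVρ⟩ := hV
  have hVs : Summable (fun j : ℤ => ‖V j‖) := by
    apply Summable.of_nonneg_of_le (fun j => norm_nonneg _) (fun j => ?_) hVρ
    nth_rewrite 1 [← mul_one (‖V j‖)]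
    exact mul_le_mul_of_nonneg_left (one_le_pow₀ hρ.le) (norm_nonneg _)
  have hπ := Real.pi_pos
  have hπC : (2 * (Real.pi:ℂ)) ≠ 0 := by
    refine mul_ne_zero two_ne_zero ?_
    exact_mod_cast Real.pi_ne_zero
  have key : ∀ k : ℤ, c k = (1 / (2 * (Real.pi:ℂ))) *
      ((t:ℂ)*(α+β) * (if k = 0 then (2*Real.pi:ℂ) else 0)
        + (α+β) * (if 0 < k then -(2*Real.pi) * Real.exp (-(t*k)) / ((k:ℤ):ℂ) else 0)
        + (α-β) * (if 0 < -k then -(2*Real.pi) * Real.exp (-(t*(-k))) / ((-k:ℤ):ℂ) else 0)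
        + 2*Real.pi * V k) := by
    intro k
    rw [hc k]
    congr 1
    have hIcong : (∫ θ in (0:ℝ)..(2*Real.pi), lnf θ * Complex.exp (-(k:ℂ) * θ * Complex.I))
        = ∫ θ in (0:ℝ)..(2*Real.pi),
            (((t:ℂ)*(α+β)) * Complex.exp (-(k:ℂ) * θ * Complex.I)
             + (α+β) * (Complex.log (1 - Complex.exp ((θ:ℂ) * Complex.I - t))
                 * Complex.exp (-(k:ℂ) * θ * Complex.I))
             + (α-β) * (Complex.log (1 - Complex.exp (((-θ:ℝ):ℂ) * Complex.I - t))
                 * Complex.exp (-(k:ℂ) * θ * Complex.I))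
             + (∑' j : ℤ, V j * Complex.exp ((j:ℂ) * θ * Complex.I))
                 * Complex.exp (-(k:ℂ) * θ * Complex.I)) := by
      apply intervalIntegral.integral_congr_ae
      have hne : ∀ᵐ θ : ℝ, θ ≠ 2*Real.pi := by
        rw [MeasureTheory.ae_iff]
        have hset : {θ : ℝ | ¬ θ ≠ 2*Real.pi} = {2*Real.pi} := by ext x; simp
        rw [hset]
        exact measure_singleton _
      filter_upwards [hne] with θ hθne hθmem
      rw [Set.uIoc_of_le (by positivity)] at hθmem
      have hθ1 : 0 < θ := hθmem.1
      have hθ2 : θ < 2*Real.pi := lt_of_le_of_ne hθmem.2 hθne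
      rw [hlnf θ, logB_plus ht hθ1 hθ2, logB_minus ht hθ1 hθ2]
      push_cast
      ring
    rw [hIcong]
    have c1 : IntervalIntegrable
        (fun θ : ℝ => ((t:ℂ)*(α+β)) * Complex.exp (-(k:ℂ) * θ * Complex.I))
        volume 0 (2*Real.pi) := by
      apply Continuous.intervalIntegrable
      fun_prop
    have c2 : IntervalIntegrable
        (fun θ : ℝ => (α+β) * (Complex.log (1 - Complex.exp ((θ:ℂ) * Complex.I - t))
          * Complex.exp (-(k:ℂ) * θ * Complex.I))) volume 0 (2*Real.pi) := by
      apply Continuous.intervalIntegrable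
      exact continuous_const.mul ((cont_log continuous_id ht).mul (by fun_prop))
    have c3 : IntervalIntegrable
        (fun θ : ℝ => (α-β) * (Complex.log (1 - Complex.exp (((-θ:ℝ):ℂ) * Complex.I - t))
          * Complex.exp (-(k:ℂ) * θ * Complex.I))) volume 0 (2*Real.pi) := by
      apply Continuous.intervalIntegrable
      exact continuous_const.mul ((cont_log continuous_neg ht).mul (by fun_prop))
    have c4 : IntervalIntegrable
        (fun θ : ℝ => (∑' j : ℤ, V j * Complex.exp ((j:ℂ) * θ * Complex.I))
          * Complex.exp (-(k:ℂ) * θ * Complex.I)) volume 0 (2*Real.pi) := by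
      apply Continuous.intervalIntegrable
      exact (cont_tsumV V hVs).mul (by fun_prop)
    rw [intervalIntegral.integral_add ((c1.add c2).add c3) c4,
      intervalIntegral.integral_add (c1.add c2) c3,
      intervalIntegral.integral_add c1 c2,
      intervalIntegral.integral_const_mul, intervalIntegral.integral_const_mul,
      intervalIntegral.integral_const_mul,
      orth' k, intLogP ht k, intLogM ht k, intV V hVs k]
  constructor
  · have h := key 0
    simp only [if_pos rfl, lt_irrefl, if_neg (lt_irrefl 0), neg_zero, Int.cast_zero, ↓reduceIte] at h
    rw [h]
    field_simp
    ring
  · intro k hk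
    have hk0 : (0:ℤ) < (k:ℤ) := by exact_mod_cast hk
    constructor
    · have h := key k
      rw [if_neg (by omega), if_pos hk0, if_neg (by omega)] at h
      have hkC : ((k:ℤ):ℂ) ≠ 0 := by exact_mod_cast (by omega : (k:ℤ) ≠ 0)
      have hkC' : ((k:ℕ):ℂ) ≠ 0 := by exact_mod_cast (by omega : (k:ℤ) ≠ 0)
      rw [h]
      push_cast
      rw [show (-((t:ℂ) * ((k:ℕ):ℂ))) = -(t:ℂ) * ((k:ℕ):ℂ) by ring]
      field_simp
      ring
    · have h := key (-(k:ℤ))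
      rw [if_neg (by omega), if_neg (by omega), if_pos (by omega)] at h
      have hkC : ((k:ℤ):ℂ) ≠ 0 := by exact_mod_cast (by omega : (k:ℤ) ≠ 0)
      have hkC' : ((k:ℕ):ℂ) ≠ 0 := by exact_mod_cast (by omega : (k:ℤ) ≠ 0)
      rw [h]
      push_cast
      simp only [neg_neg]
      rw [show (-((t:ℂ) * ((k:ℕ):ℂ))) = -(t:ℂ) * ((k:ℕ):ℂ) by ring]
      field_simp
      ring
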